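/- Let (X, dist) be a metric space, let α ∈ (0,1], let ℓ ≥ 10/α be a real, let p, v ∈ X, let C ⊆ X be finite and nonempty, and let a ∈ C be a nearest point of C to v, i.e., dist(v, a) = dist(v, C). If dist(p, C) ≥ ℓ·dist(p, v), then dist(p, a)² ≤ (1+α)·dist(p, C)². -/

import Mathlib

/-- **Reassigning a far point to the center nearest to its cell representative.**
Let `(X, dist)` be a metric space, `α ∈ (0,1]`, `ℓ ≥ 10/α` a real, `p, v ∈ X`, `C ⊆ X`
finite and nonempty, and let `a ∈ C` be a nearest point of `C` to `v`, i.e.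
`dist(v, a) = dist(v, C)`.  If `dist(p, C) ≥ ℓ·dist(p, v)`, then
`dist(p, a)² ≤ (1+α)·dist(p, C)²`. -/
theorem reassignment_cost_bound {X : Type*} [MetricSpace X]
    (α : ℝ) (hα0 : 0 < α) (hα1 : α ≤ 1) (ℓ : ℝ) (hℓ : 10 / α ≤ ℓ)
    (p v : X) (C : Finset X) (hC : C.Nonempty)
    (a : X) (ha : a ∈ C) (hnear : dist v a = Metric.infDist v (↑C : Set X))
    (hfar : ℓ * dist p v ≤ Metric.infDist p (↑C : Set X)) :
    dist p a ^ 2 ≤ (1 + α) * Metric.infDist p (↑C : Set X) ^ 2 := by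
  set D := Metric.infDist p (↑C : Set X) with hDdef
  have hD : 0 ≤ D := Metric.infDist_nonneg
  have hℓpos : 0 < ℓ := lt_of_lt_of_le (by positivity) hℓ
  have hpv : dist p v ≤ D / ℓ := (le_div_iff₀ hℓpos).mpr (by linarith [hfar])
  have hvC : Metric.infDist v (↑C : Set X) ≤ dist v p + D := by
    have := Metric.infDist_le_infDist_add_dist (x := v) (y := p) (s := (↑C : Set X))
    linarith
  have hpa : dist p a ≤ 2 * (D / ℓ) + D := by
    calc dist p a ≤ dist p v + dist v a := dist_triangle p v a
    _ = dist p v + Metric.infDist v (↑C : Set X) := by rw [hnear]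
    _ ≤ dist p v + (dist v p + D) := by linarith
    _ ≤ 2 * (D / ℓ) + D := by rw [dist_comm v p]; linarith
  have hinv : 2 / ℓ ≤ α / 5 := by
    rw [div_le_div_iff₀ hℓpos (by norm_num)]
    have : 10 ≤ α * ℓ := by
      rw [← div_le_iff₀' hα0]; exact hℓ
    linarith
  have hkey : 2 * (D / ℓ) + D ≤ (1 + α / 5) * D := by
    have : 2 * (D / ℓ) ≤ (α / 5) * D := by
      have h2 : D / ℓ = D * (1 / ℓ) := by ring
      calc 2 * (D / ℓ) = (2 / ℓ) * D := by ring
      _ ≤ (α / 5) * D := mul_le_mul_of_nonneg_right hinv hD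
    linarith
  have h0 : 0 ≤ dist p a := dist_nonneg
  have hpa2 : dist p a ≤ (1 + α / 5) * D := le_trans hpa hkey
  have := mul_self_le_mul_self h0 hpa2
  nlinarith [this, sq_nonneg D, mul_nonneg (mul_nonneg hα0.le hD) hD,
    mul_nonneg (mul_nonneg (mul_nonneg hα0.le (sub_nonneg.mpr hα1)) hD) hD]
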